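/- Let c₁, c₂ > 0, let m, β, v ∈ ℝ³ and a ∈ ℝ with a² + ‖v‖² = 1. Then the pair of equations v × m − (1/2) a β − c₁ v = 0 and c₂ a v = 0 holds if and only if v = 0 and β = 0. Hence the only invariant configuration of the orientation-observer error dynamics on the unit quaternion sphere is the one with zero vector-part error and zero gyroscope-bias error. -/

import Mathlib

open Filter Real Topology

noncomputable section

/-- ℝ³ with the Euclidean norm. -/
abbrev E3 := EuclideanSpace ℝ (Fin 3)

/-- Cross product on ℝ³. -/
def cross (u v : E3) : E3 :=
  WithLp.toLp 2 ![u 1 * v 2 - u 2 * v 1, u 2 * v 0 - u 0 * v 2, u 0 * v 1 - u 1 * v 0]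

/-- The quaternion with real (scalar) part `a` and vector (imaginary) part `v`. -/
def quat (a : ℝ) (v : E3) : Quaternion ℝ := ⟨a, v 0, v 1, v 2⟩

/-- The vector (imaginary) part of a quaternion, as an element of ℝ³. -/
def qvec (q : Quaternion ℝ) : E3 := WithLp.toLp 2 ![q.imI, q.imJ, q.imK]

/-- On the unit sphere `a² + ‖v‖² = 1`, the orientation-observer error
dynamics are stationary, i.e. `v × m − (1/2) a β − c₁ v = 0` and `c₂ a v = 0`, if and only if
the vector-part error and the gyroscope-bias error both vanish: `v = 0` and `β = 0`. -/
theorem stmt_17 (c₁ c₂ : ℝ) (hc₁ : 0 < c₁) (hc₂ : 0 < c₂)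
    (m β v : E3) (a : ℝ) (hunit : a ^ 2 + ‖v‖ ^ 2 = 1) :
    (cross v m - (a / 2) • β - c₁ • v = 0 ∧ (c₂ * a) • v = 0) ↔ (v = 0 ∧ β = 0) := by
  have hv2 : ‖v‖ ^ 2 = v 0 ^ 2 + v 1 ^ 2 + v 2 ^ 2 := by
    rw [EuclideanSpace.norm_eq, Real.sq_sqrt (by positivity)]
    simp [Fin.sum_univ_three, sq_abs]
  rw [hv2] at hunit
  constructor
  · rintro ⟨h1, h2⟩
    have e1 := fun i => congrArg (fun x : E3 => x i) h1
    have e2 := fun i => congrArg (fun x : E3 => x i) h2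
    simp only [cross, PiLp.toLp_apply, PiLp.sub_apply, PiLp.smul_apply, PiLp.zero_apply, smul_eq_mul] at e1 e2
    have g1 := e1 0; have g2 := e1 1; have g3 := e1 2
    simp only [Matrix.cons_val_zero, Matrix.cons_val_one, Matrix.head_cons,
      Matrix.cons_val_two, Matrix.tail_cons] at g1 g2 g3
    have k1 := e2 0; have k2 := e2 1; have k3 := e2 2
    by_cases ha : a = 0
    · exfalso
      subst ha
      have key : c₁ * (v 0 ^ 2 + v 1 ^ 2 + v 2 ^ 2) = 0 := by
        linear_combination (-(v 0)) * g1 + (-(v 1)) * g2 + (-(v 2)) * g3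
      nlinarith [key, hunit, hc₁]
    · have hca : c₂ * a ≠ 0 := mul_ne_zero (ne_of_gt hc₂) ha
      have hv0 : v 0 = 0 := by
        rcases mul_eq_zero.1 k1 with h | h; exact absurd h hca; exact h
      have hv1 : v 1 = 0 := by
        rcases mul_eq_zero.1 k2 with h | h; exact absurd h hca; exact h
      have hv2' : v 2 = 0 := by
        rcases mul_eq_zero.1 k3 with h | h; exact absurd h hca; exact h
      have ha2 : a / 2 ≠ 0 := by simpa using ha
      have hb0 : β 0 = 0 := by
        have : a / 2 * β 0 = 0 := by rw [hv0, hv1, hv2'] at g1; linarith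
        exact (mul_eq_zero.1 this).resolve_left ha2
      have hb1 : β 1 = 0 := by
        have : a / 2 * β 1 = 0 := by rw [hv0, hv1, hv2'] at g2; linarith
        exact (mul_eq_zero.1 this).resolve_left ha2
      have hb2 : β 2 = 0 := by
        have : a / 2 * β 2 = 0 := by rw [hv0, hv1, hv2'] at g3; linarith
        exact (mul_eq_zero.1 this).resolve_left ha2
      constructor <;> ext i <;> fin_cases i <;> simp_all
  · rintro ⟨hv, hβ⟩
    subst hv hβ
    constructor <;> ext i <;> fin_cases i <;> simp [cross]
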